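/- On words of length n, for every letter a: ∂_a ∘ ν_k − ν_k ∘ ∂_a = (n + 1 − k)·ν_{k−1} ∘ ∂_a + Σ_{b=1}^{n} θ_{a,b} ∘ ν_{k−1} ∘ ∂_b, where the ν operators after ∂ act on words of length n−1. -/

import Mathlib

/-- Insertion operator: `shOp A a` sends a word `w` (basis element of the free
`ℂ`-vector space on words) to the sum of the words obtained by inserting the
letter `a` at each of the `w.length + 1` possible positions. -/
noncomputable def shOp (A : Type) [DecidableEq A] (a : A) :
    (List A →₀ ℂ) →ₗ[ℂ] (List A →₀ ℂ) :=
  Finsupp.lift (List A →₀ ℂ) ℂ (List A)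
    (fun w => ∑ i : Fin (w.length + 1), Finsupp.single (List.insertIdx w i a) 1)

/-- Deletion operator: `delOp A a` sends a word `w` to the sum, over all positions
`i` with `w_i = a`, of the word obtained by deleting position `i`. -/
noncomputable def delOp (A : Type) [DecidableEq A] (a : A) :
    (List A →₀ ℂ) →ₗ[ℂ] (List A →₀ ℂ) :=
  Finsupp.lift (List A →₀ ℂ) ℂ (List A)
    (fun w => ∑ i : Fin w.length,
      if w.get i = a then Finsupp.single (w.eraseIdx i) 1 else 0)

/-- Replacement operator: `thetaOp A b a` sends a word `w` to the sum, over all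
positions `i` with `w_i = b`, of the word obtained by replacing the letter at
position `i` by `a`. -/
noncomputable def thetaOp (A : Type) [DecidableEq A] (b a : A) :
    (List A →₀ ℂ) →ₗ[ℂ] (List A →₀ ℂ) :=
  Finsupp.lift (List A →₀ ℂ) ℂ (List A)
    (fun w => ∑ i : Fin w.length,
      if w.get i = b then Finsupp.single (w.set i a) 1 else 0)


/-- Composition `sh_{a₁} ∘ sh_{a₂} ∘ ⋯ ∘ sh_{a_k}` of insertion operators along a list. -/
noncomputable def shChain (A : Type) [DecidableEq A] (l : List A) :
    (List A →₀ ℂ) →ₗ[ℂ] (List A →₀ ℂ) :=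
  l.foldr (fun c f => (shOp A c).comp f) LinearMap.id

/-- Composition `∂_{a₁} ∘ ∂_{a₂} ∘ ⋯ ∘ ∂_{a_k}` of deletion operators along a list. -/
noncomputable def delChain (A : Type) [DecidableEq A] (l : List A) :
    (List A →₀ ℂ) →ₗ[ℂ] (List A →₀ ℂ) :=
  l.foldr (fun c f => (delOp A c).comp f) LinearMap.id

open scoped Classical in
/-- The symmetrized shuffling operator
`ν_k = Σ_{1 ≤ a₁ ≤ ⋯ ≤ a_k ≤ n} (1/∏_j #{l : a_l = j}!) · sh_{a₁}∘⋯∘sh_{a_k}∘∂_{a₁}∘⋯∘∂_{a_k}`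
on the word algebra over the alphabet `{1,…,n}` (here `Fin n`). -/
noncomputable def nuOp (n k : ℕ) :
    (List (Fin n) →₀ ℂ) →ₗ[ℂ] (List (Fin n) →₀ ℂ) :=
  ∑ a ∈ Finset.univ.filter (fun a : Fin k → Fin n => Monotone a),
    (((∏ j : Fin n,
        Nat.factorial ((Finset.univ.filter (fun l : Fin k => a l = j)).card) : ℕ) : ℂ))⁻¹ •
      ((shChain (Fin n) (List.ofFn a)).comp (delChain (Fin n) (List.ofFn a)))


open scoped Nat
set_option maxHeartbeats 1600000

variable {A : Type} [DecidableEq A]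

/-- prepend operator -/
noncomputable def consOp (A : Type) [DecidableEq A] (x : A) :
    (List A →₀ ℂ) →ₗ[ℂ] (List A →₀ ℂ) :=
  Finsupp.lmapDomain ℂ ℂ (fun w => x :: w)

/-- length (+1) operator -/
noncomputable def lenOp (A : Type) [DecidableEq A] :
    (List A →₀ ℂ) →ₗ[ℂ] (List A →₀ ℂ) :=
  Finsupp.lift (List A →₀ ℂ) ℂ (List A)
    (fun w => ((w.length + 1 : ℕ) : ℂ) • Finsupp.single w 1)

lemma consOp_single (x : A) (w : List A) (c : ℂ) :
    consOp A x (Finsupp.single w c) = Finsupp.single (x :: w) c := by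
  simp [consOp]

lemma shOp_single (a : A) (w : List A) :
    shOp A a (Finsupp.single w 1)
      = ∑ i : Fin (w.length + 1), Finsupp.single (List.insertIdx w i a) 1 := by
  simp [shOp]

lemma delOp_single (a : A) (w : List A) :
    delOp A a (Finsupp.single w 1)
      = ∑ i : Fin w.length,
          if w.get i = a then Finsupp.single (w.eraseIdx i) 1 else 0 := by
  simp [delOp]

lemma thetaOp_single (b a : A) (w : List A) :
    thetaOp A b a (Finsupp.single w 1)
      = ∑ i : Fin w.length,
          if w.get i = b then Finsupp.single (w.set i a) 1 else 0 := by
  simp [thetaOp]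

lemma lenOp_single (w : List A) :
    lenOp A (Finsupp.single w 1)
      = ((w.length + 1 : ℕ) : ℂ) • Finsupp.single w 1 := by
  simp only [lenOp, Finsupp.lift_apply, Finsupp.sum_single_index, zero_smul, one_smul]

-- recursions
lemma shOp_single_cons (a x : A) (w : List A) :
    shOp A a (Finsupp.single (x :: w) 1)
      = Finsupp.single (a :: x :: w) 1 + consOp A x (shOp A a (Finsupp.single w 1)) := by
  rw [shOp_single, shOp_single]
  simp only [List.length_cons]
  rw [Fin.sum_univ_succ, map_sum]
  congr 1
  refine Finset.sum_congr rfl fun i _ => ?_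
  rw [consOp_single]
  rfl

lemma delOp_single_cons (a x : A) (w : List A) :
    delOp A a (Finsupp.single (x :: w) 1)
      = (if x = a then Finsupp.single w 1 else 0)
        + consOp A x (delOp A a (Finsupp.single w 1)) := by
  rw [delOp_single, delOp_single]
  simp only [List.length_cons]
  rw [Fin.sum_univ_succ, map_sum]
  congr 1
  refine Finset.sum_congr rfl fun i _ => ?_
  rw [apply_ite (consOp A x), consOp_single, map_zero]
  by_cases h : w.get i = a <;> simp_all [List.get_eq_getElem] <;> rfl

lemma thetaOp_single_cons (b a x : A) (w : List A) :
    thetaOp A b a (Finsupp.single (x :: w) 1)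
      = (if x = b then Finsupp.single (a :: w) 1 else 0)
        + consOp A x (thetaOp A b a (Finsupp.single w 1)) := by
  rw [thetaOp_single, thetaOp_single]
  simp only [List.length_cons]
  rw [Fin.sum_univ_succ, map_sum]
  congr 1
  refine Finset.sum_congr rfl fun i _ => ?_
  rw [apply_ite (consOp A x), consOp_single, map_zero]
  by_cases h : w.get i = b <;> simp_all [List.get_eq_getElem] <;> rfl

-- element-level operator recursion through consOp
lemma single_eq_smul (w : List A) (c : ℂ) :
    Finsupp.single w c = c • Finsupp.single w (1:ℂ) := by
  simp [Finsupp.smul_single]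

lemma lhom_single_ext {f g : (List A →₀ ℂ) →ₗ[ℂ] (List A →₀ ℂ)}
    (h : ∀ w, f (Finsupp.single w 1) = g (Finsupp.single w 1)) : f = g := by
  refine Finsupp.lhom_ext fun w c => ?_
  rw [single_eq_smul, map_smul, map_smul, h]

lemma shOp_consOp (a x : A) (y : List A →₀ ℂ) :
    shOp A a (consOp A x y)
      = consOp A a (consOp A x y) + consOp A x (shOp A a y) := by
  have : (shOp A a).comp (consOp A x)
      = (consOp A a).comp (consOp A x) + (consOp A x).comp (shOp A a) := by
    refine lhom_single_ext fun w => ?_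
    simp only [LinearMap.comp_apply, LinearMap.add_apply, consOp_single]
    rw [shOp_single_cons]
  exact congrArg (fun f => f y) (congrArg DFunLike.coe this)

lemma delOp_consOp (a x : A) (y : List A →₀ ℂ) :
    delOp A a (consOp A x y)
      = (if x = a then y else 0) + consOp A x (delOp A a y) := by
  have : (delOp A a).comp (consOp A x)
      = (if x = a then (LinearMap.id : (List A →₀ ℂ) →ₗ[ℂ] _) else 0)
          + (consOp A x).comp (delOp A a) := by
    refine lhom_single_ext fun w => ?_
    simp only [LinearMap.comp_apply, LinearMap.add_apply, consOp_single]
    rw [delOp_single_cons]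
    split_ifs <;> simp
  have h2 := congrArg (fun f => f y) (congrArg DFunLike.coe this)
  simp only [LinearMap.comp_apply, LinearMap.add_apply] at h2
  rw [h2]
  split_ifs <;> simp

lemma thetaOp_consOp (b a x : A) (y : List A →₀ ℂ) :
    thetaOp A b a (consOp A x y)
      = (if x = b then consOp A a y else 0) + consOp A x (thetaOp A b a y) := by
  have : (thetaOp A b a).comp (consOp A x)
      = (if x = b then consOp A a else 0) + (consOp A x).comp (thetaOp A b a) := by
    refine lhom_single_ext fun w => ?_
    simp only [LinearMap.comp_apply, LinearMap.add_apply, consOp_single]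
    rw [thetaOp_single_cons]
    split_ifs <;> simp [consOp_single]
  have h2 := congrArg (fun f => f y) (congrArg DFunLike.coe this)
  simp only [LinearMap.comp_apply, LinearMap.add_apply] at h2
  rw [h2]
  split_ifs <;> simp

lemma lenOp_consOp (x : A) (y : List A →₀ ℂ) :
    lenOp A (consOp A x y) = consOp A x (lenOp A y) + consOp A x y := by
  have : (lenOp A).comp (consOp A x)
      = (consOp A x).comp (lenOp A) + consOp A x := by
    refine lhom_single_ext fun w => ?_
    simp only [LinearMap.comp_apply, LinearMap.add_apply, consOp_single]
    rw [lenOp_single, lenOp_single, map_smul, consOp_single]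
    rw [single_eq_smul (x :: w)]
    push_cast
    rw [add_smul, add_smul]
    simp [add_comm, add_assoc, add_smul]
  have h2 := congrArg (fun f => f y) (congrArg DFunLike.coe this)
  simpa using h2

lemma delOp_single_nil (a : A) : delOp A a (Finsupp.single ([] : List A) 1) = 0 := by
  simp [delOp_single]

lemma thetaOp_single_nil (b a : A) :
    thetaOp A b a (Finsupp.single ([] : List A) 1) = 0 := by
  simp [thetaOp_single]

lemma shOp_single_nil (a : A) :
    shOp A a (Finsupp.single ([] : List A) 1) = Finsupp.single [a] 1 := by
  simp [shOp_single]

lemma del_del_single (a c : A) (w : List A) :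
    delOp A a (delOp A c (Finsupp.single w 1))
      = delOp A c (delOp A a (Finsupp.single w 1)) := by
  induction w with
  | nil => simp [delOp_single_nil]
  | cons x w ih =>
    rw [delOp_single_cons, delOp_single_cons, map_add, map_add, delOp_consOp, delOp_consOp,
      ih]
    by_cases hxc : x = c <;> by_cases hxa : x = a <;>
      simp [hxc, hxa, apply_ite (delOp A a), apply_ite (delOp A c)] <;> abel

lemma sh_sh_single (a c : A) (w : List A) :
    shOp A a (shOp A c (Finsupp.single w 1))
      = shOp A c (shOp A a (Finsupp.single w 1)) := by
  induction w with
  | nil =>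
    rw [shOp_single_nil, shOp_single_nil, shOp_single_cons, shOp_single_cons]
    simp [shOp_single_nil, consOp_single]
    abel
  | cons x w ih =>
    simp only [shOp_single_cons, map_add, shOp_consOp, consOp_single, ih]
    abel

lemma theta_sh_single (a c' c : A) (w : List A) :
    thetaOp A a c' (shOp A c (Finsupp.single w 1))
      = shOp A c (thetaOp A a c' (Finsupp.single w 1))
        + (if a = c then shOp A c' (Finsupp.single w 1) else 0) := by
  induction w with
  | nil =>
    rw [shOp_single_nil, thetaOp_single_nil, thetaOp_single_cons]
    by_cases h : a = c <;>
      simp [h, eq_comm, thetaOp_single_nil, shOp_single_nil]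
  | cons x w ih =>
    rw [shOp_single_cons, map_add, thetaOp_consOp, thetaOp_single_cons, thetaOp_single_cons,
      ih]
    by_cases hac : a = c
    · subst hac
      by_cases hxa : x = a <;>
        simp [hxa, map_add, shOp_consOp, shOp_single_cons, consOp_single] <;> abel
    · by_cases hxa : x = a <;>
        simp [hac, Ne.symm hac, hxa, map_add, shOp_consOp, shOp_single_cons, consOp_single] <;>
        abel

lemma lenOp_single_cons (x : A) (w : List A) :
    lenOp A (Finsupp.single (x :: w) 1)
      = consOp A x (lenOp A (Finsupp.single w 1)) + Finsupp.single (x :: w) 1 := by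
  rw [← consOp_single x w, lenOp_consOp, consOp_single]

lemma del_sh_single (a c : A) (w : List A) :
    delOp A a (shOp A c (Finsupp.single w 1))
      = shOp A c (delOp A a (Finsupp.single w 1))
        + (if a = c then lenOp A (Finsupp.single w 1) else 0)
        + thetaOp A a c (Finsupp.single w 1) := by
  induction w with
  | nil =>
    rw [shOp_single_nil, delOp_single_nil, thetaOp_single_nil, delOp_single_cons]
    by_cases h : a = c <;>
      simp [h, eq_comm, lenOp_single, delOp_single_nil]
  | cons x w ih =>
    rw [shOp_single_cons, map_add, delOp_consOp, delOp_single_cons, delOp_single_cons,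
      thetaOp_single_cons, ih]
    by_cases hac : a = c
    · subst hac
      by_cases hxa : x = a <;>
        simp [hxa, map_add, shOp_consOp, shOp_single_cons, consOp_single,
          lenOp_single_cons] <;> abel
    · by_cases hxa : x = a <;>
        simp [hac, Ne.symm hac, hxa, map_add, shOp_consOp, shOp_single_cons, consOp_single,
          lenOp_consOp] <;> abel

-- general-element versions
lemma del_del (a c : A) (y : List A →₀ ℂ) :
    delOp A a (delOp A c y) = delOp A c (delOp A a y) := by
  have : (delOp A a).comp (delOp A c) = (delOp A c).comp (delOp A a) :=
    lhom_single_ext fun w => del_del_single a c w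
  exact congrArg (fun f => f y) (congrArg DFunLike.coe this)

lemma sh_sh (a c : A) (y : List A →₀ ℂ) :
    shOp A a (shOp A c y) = shOp A c (shOp A a y) := by
  have : (shOp A a).comp (shOp A c) = (shOp A c).comp (shOp A a) :=
    lhom_single_ext fun w => sh_sh_single a c w
  exact congrArg (fun f => f y) (congrArg DFunLike.coe this)

lemma theta_sh (a c' c : A) (y : List A →₀ ℂ) :
    thetaOp A a c' (shOp A c y)
      = shOp A c (thetaOp A a c' y) + (if a = c then shOp A c' y else 0) := by
  have : (thetaOp A a c').comp (shOp A c)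
      = (shOp A c).comp (thetaOp A a c') + (if a = c then shOp A c' else 0) := by
    refine lhom_single_ext fun w => ?_
    simp only [LinearMap.comp_apply, LinearMap.add_apply]
    rw [theta_sh_single]
    split_ifs <;> simp
  have h2 := congrArg (fun f => f y) (congrArg DFunLike.coe this)
  simp only [LinearMap.comp_apply, LinearMap.add_apply] at h2
  rw [h2]
  split_ifs <;> simp

lemma del_sh (a c : A) (y : List A →₀ ℂ) :
    delOp A a (shOp A c y)
      = shOp A c (delOp A a y) + (if a = c then lenOp A y else 0)
        + thetaOp A a c y := by
  have : (delOp A a).comp (shOp A c)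
      = (shOp A c).comp (delOp A a) + (if a = c then lenOp A else 0)
        + thetaOp A a c := by
    refine lhom_single_ext fun w => ?_
    simp only [LinearMap.comp_apply, LinearMap.add_apply]
    rw [del_sh_single]
    split_ifs <;> simp
  have h2 := congrArg (fun f => f y) (congrArg DFunLike.coe this)
  simp only [LinearMap.comp_apply, LinearMap.add_apply] at h2
  rw [h2]
  split_ifs <;> simp

-- homogeneous component
noncomputable def Hmod (A : Type) [DecidableEq A] (m : ℕ) : Submodule ℂ (List A →₀ ℂ) :=
  Submodule.span ℂ {x | ∃ w : List A, w.length = m ∧ x = Finsupp.single w 1}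

lemma single_mem_Hmod {m : ℕ} {w : List A} (hw : w.length = m) :
    Finsupp.single w (1:ℂ) ∈ Hmod A m :=
  Submodule.subset_span ⟨w, hw, rfl⟩

lemma delOp_mem_Hmod {m : ℕ} {x : List A →₀ ℂ} (a : A) (hx : x ∈ Hmod A (m+1)) :
    delOp A a x ∈ Hmod A m := by
  refine Submodule.span_induction ?_ ?_ ?_ ?_ hx
  · rintro y ⟨w, hw, rfl⟩
    rw [delOp_single]
    refine Submodule.sum_mem _ fun i _ => ?_
    split_ifs
    · refine single_mem_Hmod ?_
      rw [List.length_eraseIdx_of_lt i.isLt, hw]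
      omega
    · exact Submodule.zero_mem _
  · simp
  · intro y z _ _ hy hz
    rw [map_add]; exact Submodule.add_mem _ hy hz
  · intro c y _ hy
    rw [map_smul]; exact Submodule.smul_mem _ c hy

lemma shOp_mem_Hmod {m : ℕ} {x : List A →₀ ℂ} (a : A) (hx : x ∈ Hmod A m) :
    shOp A a x ∈ Hmod A (m+1) := by
  refine Submodule.span_induction ?_ ?_ ?_ ?_ hx
  · rintro y ⟨w, hw, rfl⟩
    rw [shOp_single]
    refine Submodule.sum_mem _ fun i _ => ?_
    refine single_mem_Hmod ?_
    rw [List.length_insertIdx_of_le_length (by omega : (i:ℕ) ≤ w.length), hw]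
  · simp
  · intro y z _ _ hy hz
    rw [map_add]; exact Submodule.add_mem _ hy hz
  · intro c y _ hy
    rw [map_smul]; exact Submodule.smul_mem _ c hy

lemma thetaOp_mem_Hmod {m : ℕ} {x : List A →₀ ℂ} (a c : A) (hx : x ∈ Hmod A m) :
    thetaOp A a c x ∈ Hmod A m := by
  refine Submodule.span_induction ?_ ?_ ?_ ?_ hx
  · rintro y ⟨w, hw, rfl⟩
    rw [thetaOp_single]
    refine Submodule.sum_mem _ fun i _ => ?_
    split_ifs
    · exact single_mem_Hmod (by rw [List.length_set, hw])
    · exact Submodule.zero_mem _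
  · simp
  · intro y z _ _ hy hz
    rw [map_add]; exact Submodule.add_mem _ hy hz
  · intro c y _ hy
    rw [map_smul]; exact Submodule.smul_mem _ c hy

lemma lenOp_Hmod {m : ℕ} {x : List A →₀ ℂ} (hx : x ∈ Hmod A m) :
    lenOp A x = ((m + 1 : ℕ) : ℂ) • x := by
  refine Submodule.span_induction ?_ ?_ ?_ ?_ hx
  · rintro y ⟨w, hw, rfl⟩
    rw [lenOp_single, hw]
  · simp
  · intro y z _ _ hy hz
    rw [map_add, hy, hz, smul_add]
  · intro c y _ hy
    rw [map_smul, hy, smul_comm]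

lemma delOp_Hmod_zero {x : List A →₀ ℂ} (a : A) (hx : x ∈ Hmod A 0) :
    delOp A a x = 0 := by
  refine Submodule.span_induction ?_ ?_ ?_ ?_ hx
  · rintro y ⟨w, hw, rfl⟩
    rw [List.length_eq_zero_iff] at hw
    subst hw
    exact delOp_single_nil a
  · simp
  · intro y z _ _ hy hz
    rw [map_add, hy, hz, add_zero]
  · intro c y _ hy
    rw [map_smul, hy, smul_zero]

-- the recursively defined symmetrization operator
noncomputable def NOp (n : ℕ) : ℕ → ((List (Fin n) →₀ ℂ) →ₗ[ℂ] (List (Fin n) →₀ ℂ))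
  | 0 => LinearMap.id
  | (k+1) => ∑ c : Fin n, (shOp (Fin n) c).comp ((NOp n k).comp (delOp (Fin n) c))

lemma NOp_zero_apply (n : ℕ) (z : List (Fin n) →₀ ℂ) : NOp n 0 z = z := rfl

lemma NOp_succ_apply (n k : ℕ) (z : List (Fin n) →₀ ℂ) :
    NOp n (k+1) z = ∑ c : Fin n, shOp (Fin n) c (NOp n k (delOp (Fin n) c z)) := by
  simp [NOp]

lemma NOp_mem_Hmod {n : ℕ} : ∀ (k m : ℕ) (x : List (Fin n) →₀ ℂ),
    x ∈ Hmod (Fin n) m → NOp n k x ∈ Hmod (Fin n) m := by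
  intro k
  induction k with
  | zero => intro m x hx; exact hx
  | succ k ih =>
    intro m x hx
    rw [NOp_succ_apply]
    refine Submodule.sum_mem _ fun c _ => ?_
    cases m with
    | zero =>
      rw [delOp_Hmod_zero c hx, map_zero, map_zero]
      exact Submodule.zero_mem _
    | succ m' =>
      exact shOp_mem_Hmod c (ih m' _ (delOp_mem_Hmod c hx))

lemma main_commutator (n : ℕ) (a : Fin n) : ∀ (k m : ℕ) (x : List (Fin n) →₀ ℂ),
    x ∈ Hmod (Fin n) m →
    delOp (Fin n) a (NOp n k x) - NOp n k (delOp (Fin n) a x)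
      = ((k : ℂ) * ((m : ℂ) + 1 - (k : ℂ))) • NOp n (k-1) (delOp (Fin n) a x)
        + (k : ℂ) • ∑ c : Fin n,
            thetaOp (Fin n) a c (NOp n (k-1) (delOp (Fin n) c x)) := by
  intro k
  induction k with
  | zero => intro m x hx; simp [NOp_zero_apply]
  | succ k ih =>
    intro m x hx
    cases m with
    | zero =>
      have h0 : ∀ c : Fin n, delOp (Fin n) c x = 0 := fun c => delOp_Hmod_zero c hx
      rw [NOp_succ_apply, NOp_succ_apply]
      simp [h0]
    | succ m' =>
      have hdc : ∀ c : Fin n, delOp (Fin n) c x ∈ Hmod (Fin n) m' :=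
        fun c => delOp_mem_Hmod c hx
      have hIH : ∀ c : Fin n,
          delOp (Fin n) a (NOp n k (delOp (Fin n) c x))
            = NOp n k (delOp (Fin n) c (delOp (Fin n) a x))
              + (((k:ℂ) * ((m':ℂ) + 1 - (k:ℂ)))
                  • NOp n (k-1) (delOp (Fin n) c (delOp (Fin n) a x))
                + (k:ℂ) • ∑ d : Fin n,
                    thetaOp (Fin n) a d (NOp n (k-1) (delOp (Fin n) d (delOp (Fin n) c x)))) := by
        intro c
        have h2 := ih m' _ (hdc c)
        rw [sub_eq_iff_eq_add] at h2
        rw [h2, del_del a c, add_comm]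
      have hts : ∀ (c d : Fin n) (z : List (Fin n) →₀ ℂ),
          shOp (Fin n) c (thetaOp (Fin n) a d z)
            = thetaOp (Fin n) a d (shOp (Fin n) c z)
              - (if a = c then shOp (Fin n) d z else 0) := by
        intro c d z
        rw [theta_sh]
        abel
      have hkrec : ∀ z : List (Fin n) →₀ ℂ,
          (k:ℂ) • (∑ c : Fin n, shOp (Fin n) c (NOp n (k-1) (delOp (Fin n) c z)))
            = (k:ℂ) • NOp n k z := by
        intro z
        cases k with
        | zero => simp
        | succ k'' => rw [Nat.add_sub_cancel, ← NOp_succ_apply]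
      rw [NOp_succ_apply, NOp_succ_apply, map_sum]
      have step1 :
          (∑ c : Fin n, delOp (Fin n) a (shOp (Fin n) c (NOp n k (delOp (Fin n) c x))))
            = ∑ c : Fin n, (shOp (Fin n) c (NOp n k (delOp (Fin n) c (delOp (Fin n) a x)))
                + (((k:ℂ) * ((m':ℂ) + 1 - (k:ℂ)))
                    • shOp (Fin n) c (NOp n (k-1) (delOp (Fin n) c (delOp (Fin n) a x)))
                  + (k:ℂ) • ∑ d : Fin n,
                      shOp (Fin n) c (thetaOp (Fin n) a d
                        (NOp n (k-1) (delOp (Fin n) d (delOp (Fin n) c x)))))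
                + (if a = c then lenOp (Fin n) (NOp n k (delOp (Fin n) c x)) else 0)
                + thetaOp (Fin n) a c (NOp n k (delOp (Fin n) c x))) := by
        refine Finset.sum_congr rfl fun c _ => ?_
        rw [del_sh, hIH, map_add, map_add, map_smul, map_smul, map_sum]
      rw [step1, Finset.sum_add_distrib, Finset.sum_add_distrib, Finset.sum_add_distrib,
        Finset.sum_add_distrib, ← Finset.smul_sum, ← Finset.smul_sum]
      simp only [Finset.sum_ite_eq, Finset.mem_univ, if_true]
      have hlen : lenOp (Fin n) (NOp n k (delOp (Fin n) a x))
          = ((m' + 1 : ℕ) : ℂ) • NOp n k (delOp (Fin n) a x) :=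
        lenOp_Hmod (NOp_mem_Hmod k m' _ (hdc a))
      rw [hlen]
      have hS2 : (∑ c : Fin n, ∑ d : Fin n,
            shOp (Fin n) c (thetaOp (Fin n) a d
              (NOp n (k-1) (delOp (Fin n) d (delOp (Fin n) c x)))))
          = (∑ d : Fin n, thetaOp (Fin n) a d
              (∑ c : Fin n, shOp (Fin n) c (NOp n (k-1) (delOp (Fin n) c (delOp (Fin n) d x)))))
            - ∑ d : Fin n, shOp (Fin n) d (NOp n (k-1) (delOp (Fin n) d (delOp (Fin n) a x))) := by
        rw [Finset.sum_comm, ← Finset.sum_sub_distrib]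
        refine Finset.sum_congr rfl fun d _ => ?_
        have : ∀ c : Fin n,
            shOp (Fin n) c (thetaOp (Fin n) a d
              (NOp n (k-1) (delOp (Fin n) d (delOp (Fin n) c x))))
            = thetaOp (Fin n) a d (shOp (Fin n) c
                (NOp n (k-1) (delOp (Fin n) c (delOp (Fin n) d x))))
              - (if a = c then
                  shOp (Fin n) d (NOp n (k-1) (delOp (Fin n) d (delOp (Fin n) c x))) else 0) := by
          intro c
          rw [hts c d, del_del d c]
        rw [Finset.sum_congr rfl fun c _ => this c, Finset.sum_sub_distrib, ← map_sum]
        simp only [Finset.sum_ite_eq, Finset.mem_univ, if_true, del_del d a]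
      rw [hS2]
      have hsmul1 : ((k:ℂ) * ((m':ℂ) + 1 - (k:ℂ)))
            • (∑ c : Fin n, shOp (Fin n) c (NOp n (k-1) (delOp (Fin n) c (delOp (Fin n) a x))))
          = (((m':ℂ) + 1 - (k:ℂ)) * (k:ℂ)) • NOp n k (delOp (Fin n) a x) := by
        rw [mul_comm, mul_smul, hkrec, ← mul_smul]
      have hsmul2 : (k:ℂ) • ((∑ d : Fin n, thetaOp (Fin n) a d
              (∑ c : Fin n, shOp (Fin n) c (NOp n (k-1) (delOp (Fin n) c (delOp (Fin n) d x)))))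
            - ∑ d : Fin n, shOp (Fin n) d (NOp n (k-1) (delOp (Fin n) d (delOp (Fin n) a x))))
          = (k:ℂ) • (∑ d : Fin n, thetaOp (Fin n) a d (NOp n k (delOp (Fin n) d x)))
            - (k:ℂ) • NOp n k (delOp (Fin n) a x) := by
        rw [smul_sub, hkrec]
        congr 1
        rw [Finset.smul_sum, Finset.smul_sum]
        refine Finset.sum_congr rfl fun d _ => ?_
        rw [← map_smul, ← map_smul, hkrec]
      rw [hsmul1, hsmul2]
      simp only [Nat.add_sub_cancel]
      push_cast
      module

lemma shChain_nil : shChain A [] = LinearMap.id := rfl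
lemma shChain_cons (c : A) (t : List A) :
    shChain A (c :: t) = (shOp A c).comp (shChain A t) := rfl
lemma delChain_nil : delChain A [] = LinearMap.id := rfl
lemma delChain_cons (c : A) (t : List A) :
    delChain A (c :: t) = (delOp A c).comp (delChain A t) := rfl

lemma del_delChain (t : List A) (c : A) (y : List A →₀ ℂ) :
    delOp A c (delChain A t y) = delChain A t (delOp A c y) := by
  induction t generalizing y with
  | nil => rfl
  | cons d t ih =>
    rw [delChain_cons, LinearMap.comp_apply, LinearMap.comp_apply, del_del, ih]

lemma delChain_perm {l l' : List A} (h : l.Perm l') : delChain A l = delChain A l' := by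
  induction h with
  | nil => rfl
  | cons x _ ih => rw [delChain_cons, delChain_cons, ih]
  | swap x y l =>
    rw [delChain_cons, delChain_cons, delChain_cons, delChain_cons,
      ← LinearMap.comp_assoc, ← LinearMap.comp_assoc]
    congr 1
    exact LinearMap.ext fun z => del_del y x z
  | trans _ _ ih1 ih2 => rw [ih1, ih2]

lemma shChain_perm {l l' : List A} (h : l.Perm l') : shChain A l = shChain A l' := by
  induction h with
  | nil => rfl
  | cons x _ ih => rw [shChain_cons, shChain_cons, ih]
  | swap x y l =>
    rw [shChain_cons, shChain_cons, shChain_cons, shChain_cons,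
      ← LinearMap.comp_assoc, ← LinearMap.comp_assoc]
    congr 1
    exact LinearMap.ext fun z => sh_sh y x z
  | trans _ _ ih1 ih2 => rw [ih1, ih2]

lemma NOp_eq_sum (n : ℕ) : ∀ k : ℕ,
    NOp n k = ∑ b : Fin k → Fin n,
      (shChain (Fin n) (List.ofFn b)).comp (delChain (Fin n) (List.ofFn b)) := by
  intro k
  induction k with
  | zero =>
    rw [Fintype.sum_unique]
    simp only [List.ofFn_zero, shChain_nil, delChain_nil]
    rfl
  | succ k ih =>
    rw [show NOp n (k+1) = ∑ c : Fin n,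
        (shOp (Fin n) c).comp ((NOp n k).comp (delOp (Fin n) c)) from rfl, ih]
    rw [← (Fin.consEquiv (fun _ : Fin (k+1) => Fin n)).sum_comp]
    rw [Fintype.sum_prod_type]
    refine Finset.sum_congr rfl fun c _ => ?_
    refine LinearMap.ext fun z => ?_
    simp only [LinearMap.comp_apply, LinearMap.sum_apply, map_sum]
    refine Finset.sum_congr rfl fun b _ => ?_
    have hofn : List.ofFn (Fin.consEquiv (fun _ : Fin (k+1) => Fin n) (c, b)) = c :: List.ofFn b := by
      rw [List.ofFn_succ]
      simp [Fin.consEquiv]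
    rw [hofn, shChain_cons, delChain_cons]
    simp only [LinearMap.comp_apply]
    rw [del_delChain]

open scoped Classical in
lemma sort_self {k n : ℕ} {α : Fin k → Fin n} (hα : Monotone α) :
    α ∘ (Tuple.sort α) = α := by
  have h := (Tuple.comp_sort_eq_comp_iff_monotone (f := α) (σ := 1)).2 (by simpa using hα)
  simpa using h.symm

open scoped Classical in
lemma comp_perm_mem_fib {k n : ℕ} {α : Fin k → Fin n} (hα : Monotone α)
    (σ : Equiv.Perm (Fin k)) :
    (α ∘ σ) ∘ Tuple.sort (α ∘ σ) = α := by
  rw [Tuple.comp_perm_comp_sort_eq_comp_sort, sort_self hα]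

open scoped Classical in
lemma card_fib {k n : ℕ} {α : Fin k → Fin n} (hα : Monotone α) :
    k ! = (Finset.univ.filter fun b : Fin k → Fin n => b ∘ ⇑(Tuple.sort b) = α).card
      * ∏ j : Fin n, (Fintype.card {i // α i = j})! := by
  have h1 : (Finset.univ : Finset (Equiv.Perm (Fin k))).card
      = ∑ b ∈ (Finset.univ.filter fun b : Fin k → Fin n => b ∘ ⇑(Tuple.sort b) = α),
          (Finset.univ.filter fun σ : Equiv.Perm (Fin k) => α ∘ ⇑σ = b).card := by
    refine Finset.card_eq_sum_card_fiberwise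
      (f := fun σ : Equiv.Perm (Fin k) => α ∘ ⇑σ) fun σ _ => ?_
    simp only [Finset.mem_filter, Finset.mem_univ, true_and]
    exact Finset.mem_coe.2 (Finset.mem_filter.2 ⟨Finset.mem_univ _, comp_perm_mem_fib hα σ⟩)
  have h2 : ∀ b ∈ (Finset.univ.filter fun b : Fin k → Fin n => b ∘ ⇑(Tuple.sort b) = α),
      (Finset.univ.filter fun σ : Equiv.Perm (Fin k) => α ∘ ⇑σ = b).card
        = ∏ j : Fin n, (Fintype.card {i // α i = j})! := by
    intro b hb
    simp only [Finset.mem_filter, Finset.mem_univ, true_and] at hb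
    have hb' : α ∘ ⇑(Tuple.sort b)⁻¹ = b := by
      funext i
      have := congrFun hb ((Tuple.sort b)⁻¹ i)
      simpa using this.symm
    rw [← Fintype.card_subtype, ← DomMulAct.stabilizer_card α]
    apply Fintype.card_congr
    refine Equiv.subtypeEquiv (Equiv.mulRight (Tuple.sort b)) fun σ => ?_
    constructor
    · intro h
      funext i
      simp only [Equiv.coe_mulRight, Equiv.Perm.coe_mul, Function.comp_apply]
      have := congrFun h ((Tuple.sort b) i)
      simp only [Function.comp_apply] at this
      rw [this]
      exact congrFun hb i
    · intro h
      funext i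
      have := congrFun h ((Tuple.sort b)⁻¹ i)
      simp only [Equiv.coe_mulRight, Equiv.Perm.coe_mul, Function.comp_apply,
        Equiv.Perm.inv_def, Equiv.apply_symm_apply] at this
      show α (σ i) = b i
      rw [this]
      exact (congrFun hb' i)
  have h3 : (Finset.univ : Finset (Equiv.Perm (Fin k))).card = k ! := by
    rw [Finset.card_univ, Fintype.card_perm, Fintype.card_fin]
  rw [← h3, h1, Finset.sum_congr rfl h2, Finset.sum_const, smul_eq_mul]

open scoped Classical in
lemma ofFn_comp_perm_perm {k n : ℕ} (α : Fin k → Fin n) (σ : Equiv.Perm (Fin k)) :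
    (List.ofFn (α ∘ σ)).Perm (List.ofFn α) := by
  rw [List.ofFn_eq_map, List.ofFn_eq_map]
  have h : ((List.finRange k).map ⇑σ).Perm (List.finRange k) := by
    refine (List.perm_ext_iff_of_nodup ?_ ?_).2 ?_
    · exact (List.nodup_finRange k).map σ.injective
    · exact List.nodup_finRange k
    · intro x
      simp only [List.mem_map, List.mem_finRange, true_iff, iff_true]
      exact ⟨σ⁻¹ x, trivial, by simp⟩
  have h2 := h.map α
  rw [List.map_map] at h2
  exact h2

open scoped Classical in
lemma nuOp_eq_NOp (n k : ℕ) : nuOp n k = ((k ! : ℕ) : ℂ)⁻¹ • NOp n k := by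
  rw [NOp_eq_sum]
  have hmaps : ∀ b : Fin k → Fin n, b ∈ (Finset.univ : Finset (Fin k → Fin n)) →
      (b ∘ Tuple.sort b) ∈ Finset.univ.filter (fun a : Fin k → Fin n => Monotone a) := by
    intro b _
    simp only [Finset.mem_filter, Finset.mem_univ, true_and]
    exact Tuple.monotone_sort b
  rw [← Finset.sum_fiberwise_of_maps_to hmaps
    (fun b => (shChain (Fin n) (List.ofFn b)).comp (delChain (Fin n) (List.ofFn b)))]
  rw [Finset.smul_sum, nuOp]
  refine Finset.sum_congr rfl fun α hα => ?_
  simp only [Finset.mem_filter, Finset.mem_univ, true_and] at hα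
  have hval : ∀ b ∈ Finset.univ.filter
      (fun b : Fin k → Fin n => b ∘ Tuple.sort b = α),
      (shChain (Fin n) (List.ofFn b)).comp (delChain (Fin n) (List.ofFn b))
        = (shChain (Fin n) (List.ofFn α)).comp (delChain (Fin n) (List.ofFn α)) := by
    intro b hb
    simp only [Finset.mem_filter, Finset.mem_univ, true_and] at hb
    have hb' : α ∘ ⇑(Tuple.sort b)⁻¹ = b := by
      funext i
      have := congrFun hb ((Tuple.sort b)⁻¹ i)
      simpa using this.symm
    have hperm : (List.ofFn b).Perm (List.ofFn α) := by
      rw [← hb']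
      exact ofFn_comp_perm_perm α _
    rw [shChain_perm hperm, delChain_perm hperm]
  rw [Finset.sum_congr rfl hval, Finset.sum_const, ← Nat.cast_smul_eq_nsmul ℂ, smul_smul]
  congr 1
  have hcount := card_fib (n := n) hα
  have hfacne : ((∏ j : Fin n, (Fintype.card {i // α i = j})! : ℕ) : ℂ) ≠ 0 :=
    Nat.cast_ne_zero.2 (Finset.prod_ne_zero_iff.2 fun j _ => Nat.factorial_ne_zero _)
  have hkfacne : ((k ! : ℕ) : ℂ) ≠ 0 :=
    Nat.cast_ne_zero.2 (Nat.factorial_ne_zero _)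
  have hcards : ∀ j : Fin n,
      (Finset.univ.filter (fun l : Fin k => α l = j)).card = Fintype.card {i // α i = j} := by
    intro j
    rw [Fintype.card_subtype]
  have hC : ((k ! : ℕ) : ℂ)
      = ((Finset.univ.filter fun b : Fin k → Fin n => b ∘ Tuple.sort b = α).card : ℂ)
        * ((∏ j : Fin n, (Fintype.card {i // α i = j})! : ℕ) : ℂ) := by
    rw [← Nat.cast_mul, hcount]
  rw [show (∏ j : Fin n,
      ((Finset.univ.filter (fun l : Fin k => α l = j)).card)! : ℕ)
      = (∏ j : Fin n, (Fintype.card {i // α i = j})! : ℕ) from by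
    exact Finset.prod_congr rfl fun j _ => by rw [hcards j]]
  have hmem : α ∈ Finset.univ.filter
      (fun b : Fin k → Fin n => b ∘ ⇑(Tuple.sort b) = α) := by
    simp only [Finset.mem_filter, Finset.mem_univ, true_and]
    exact sort_self hα
  have hcard0 : (((Finset.univ.filter
      (fun b : Fin k → Fin n => b ∘ ⇑(Tuple.sort b) = α)).card : ℕ) : ℂ) ≠ 0 :=
    Nat.cast_ne_zero.2 (Finset.card_ne_zero_of_mem hmem)
  rw [hC, mul_inv]
  rw [mul_comm (((Finset.univ.filter
      (fun b : Fin k → Fin n => b ∘ ⇑(Tuple.sort b) = α)).card : ℂ))⁻¹]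
  rw [mul_assoc, inv_mul_cancel₀ hcard0, mul_one]

/-- On words of length `n`, for every letter `a`:
`∂_a ∘ ν_k − ν_k ∘ ∂_a = (n+1−k)·ν_{k−1} ∘ ∂_a + Σ_{b=1}^{n} θ_{a,b} ∘ ν_{k−1} ∘ ∂_b`. -/
theorem del_nu_commutator (n k : ℕ) (hk : 1 ≤ k) (a : Fin n)
    (w : List (Fin n)) (hw : w.length = n) :
    delOp (Fin n) a (nuOp n k (Finsupp.single w 1))
        - nuOp n k (delOp (Fin n) a (Finsupp.single w 1))
      = ((n : ℂ) + 1 - (k : ℂ)) • nuOp n (k-1) (delOp (Fin n) a (Finsupp.single w 1))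
        + ∑ b : Fin n,
            thetaOp (Fin n) a b (nuOp n (k-1) (delOp (Fin n) b (Finsupp.single w 1))) := by
  have hx : Finsupp.single w (1:ℂ) ∈ Hmod (Fin n) n := single_mem_Hmod hw
  have hmain := main_commutator n a k n (Finsupp.single w 1) hx
  have hk0 : (k : ℂ) ≠ 0 := Nat.cast_ne_zero.2 (by omega)
  have h1 : ((k ! : ℕ) : ℂ)⁻¹ * (k:ℂ) = (((k-1)! : ℕ) : ℂ)⁻¹ := by
    have hfact : ((k ! : ℕ) : ℂ) = (k : ℂ) * (((k-1)! : ℕ) : ℂ) := by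
      rw [← Nat.mul_factorial_pred (by omega : k ≠ 0)]
      push_cast
      ring
    rw [hfact, mul_inv, mul_comm ((k:ℂ))⁻¹, mul_assoc, inv_mul_cancel₀ hk0, mul_one]
  rw [nuOp_eq_NOp n k, nuOp_eq_NOp n (k-1)]
  simp only [LinearMap.smul_apply, map_smul]
  rw [← smul_sub, hmain]
  simp only [smul_add, smul_smul, ← Finset.smul_sum]
  match_scalars
  · linear_combination ((n : ℂ) + 1 - (k : ℂ)) * h1
  · linear_combination h1
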